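/- For each r ≥ 0 there is a polynomial f_r ∈ ℚ[X] of degree 3r with leading coefficient 1/r! such that, for every positive integer k with k^2 ≥ r, the coefficient of x^r in ∏_{j=1}^{k} (1 + j x)^j ∏_{j=k+1}^{2k} (1 + j x)^{2k-j} equals f_r(k). -/

import Mathlib

open Polynomial

/-- The polynomial `∏_{j=1}^{k} (1 + j x)^j · ∏_{j=k+1}^{2k} (1 + j x)^{2k-j}` over ℚ. -/
noncomputable def genPoly (k : ℕ) : Polynomial ℚ :=
  (∏ j ∈ Finset.Icc 1 k, (1 + Polynomial.C (j : ℚ) * Polynomial.X) ^ j) *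
    ∏ j ∈ Finset.Icc (k + 1) (2 * k), (1 + Polynomial.C (j : ℚ) * Polynomial.X) ^ (2 * k - j)

open Finset

noncomputable section

def lin (j : ℕ) : Polynomial ℚ := 1 + Polynomial.C (j : ℚ) * Polynomial.X

def geom (j : ℕ) : PowerSeries ℚ := PowerSeries.mk fun t => (-(j:ℚ))^t

lemma lin_mul_geom (j : ℕ) : ((lin j : Polynomial ℚ) : PowerSeries ℚ) * geom j = 1 := by
  ext n
  rw [lin]
  push_cast [Polynomial.coe_add, Polynomial.coe_one, Polynomial.coe_mul, Polynomial.coe_C,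
    Polynomial.coe_X]
  rw [add_mul, one_mul, mul_assoc]
  cases n with
  | zero => simp [geom]
  | succ n =>
    simp only [map_add, PowerSeries.coeff_C_mul, PowerSeries.coeff_succ_X_mul, geom,
      PowerSeries.coeff_mk, PowerSeries.coeff_one]
    ring_nf
    simp [pow_succ]

def pprod (s : Finset ℕ) (m : ℕ → ℕ) : Polynomial ℚ := ∏ j ∈ s, lin j ^ m j

lemma derivEq (s : Finset ℕ) (m : ℕ → ℕ) :
    ((derivative (pprod s m) : Polynomial ℚ) : PowerSeries ℚ)
      = (pprod s m : PowerSeries ℚ) *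
        ∑ j ∈ s, PowerSeries.C ((m j : ℚ) * j) * geom j := by
  classical
  induction s using Finset.induction_on with
  | empty => simp [pprod]
  | insert a s hj ih =>
    rw [pprod, Finset.prod_insert hj, Finset.sum_insert hj]
    rw [derivative_mul, derivative_pow]
    have hdl : derivative (lin a) = Polynomial.C (a:ℚ) := by simp [lin]
    rw [hdl]
    push_cast [Polynomial.coe_add, Polynomial.coe_mul, Polynomial.coe_pow, Polynomial.coe_C]
    rw [← pprod, ih]
    have key : PowerSeries.C (m a : ℚ) * ((lin a : Polynomial ℚ) : PowerSeries ℚ)^(m a - 1) *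
        PowerSeries.C (a : ℚ)
        = ((lin a : Polynomial ℚ) : PowerSeries ℚ)^(m a) *
          (PowerSeries.C ((m a : ℚ) * a) * geom a) := by
      cases hma : m a with
      | zero => simp
      | succ n =>
        have h1 : ((lin a : Polynomial ℚ) : PowerSeries ℚ)^(n+1) * geom a
            = ((lin a : Polynomial ℚ) : PowerSeries ℚ)^n := by
          rw [pow_succ, mul_assoc, lin_mul_geom, mul_one]
        have : (((n:ℚ)+1) : ℚ) = ((n+1 : ℕ) : ℚ) := by push_cast; ring
        rw [map_mul]
        push_cast
        linear_combination (-(PowerSeries.C ((n:ℚ)+1) * PowerSeries.C (a:ℚ))) * h1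
    linear_combination ((pprod s m : Polynomial ℚ) : PowerSeries ℚ) * key

lemma newton (s : Finset ℕ) (m : ℕ → ℕ) (r : ℕ) :
    ((r:ℚ)+1) * (pprod s m).coeff (r+1)
      = ∑ i ∈ range (r+1), (pprod s m).coeff i *
          ((-1:ℚ)^(r-i) * ∑ j ∈ s, (m j : ℚ) * (j:ℚ)^(r+1-i)) := by
  have h := congrArg (PowerSeries.coeff r) (derivEq s m)
  rw [Polynomial.coeff_coe, Polynomial.coeff_derivative, PowerSeries.coeff_mul,
    Finset.Nat.sum_antidiagonal_eq_sum_range_succ_mk] at h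
  rw [mul_comm] at h
  rw [h]
  refine Finset.sum_congr rfl fun i hi => ?_
  have hile : i ≤ r := by simpa using Nat.lt_succ_iff.mp (Finset.mem_range.mp hi)
  rw [Polynomial.coeff_coe]
  congr 1
  rw [map_sum]
  rw [Finset.mul_sum]
  refine Finset.sum_congr rfl fun j hj => ?_
  rw [PowerSeries.coeff_C_mul]
  simp only [geom, PowerSeries.coeff_mk]
  have h1 : r + 1 - i = (r - i) + 1 := by omega
  rw [h1, neg_pow]
  ring

def Gp (p : ℕ) : Polynomial ℚ :=
  ∑ i ∈ range (p+1), Polynomial.C (_root_.bernoulli i * ((p+1).choose i) / (p+1)) * Polynomial.X^(p+1-i)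

lemma Gp_eval (p n : ℕ) : (Gp p).eval (n:ℚ) = ∑ j ∈ range n, (j:ℚ)^p := by
  rw [sum_range_pow, Gp, Polynomial.eval_finset_sum]
  refine Finset.sum_congr rfl fun i hi => ?_
  simp
  ring

lemma Gp_natDegree_le (p : ℕ) : (Gp p).natDegree ≤ p + 1 := by
  refine Polynomial.natDegree_sum_le_of_forall_le _ _ fun i hi => ?_
  refine le_trans (Polynomial.natDegree_C_mul_le _ _) ?_
  simpa using Nat.sub_le (p+1) i

lemma Gp_coeff_top (p : ℕ) : (Gp p).coeff (p+1) = 1/(p+1) := by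
  rw [Gp, Polynomial.finset_sum_coeff]
  rw [Finset.sum_eq_single 0]
  · simp
  · intro i hi hne
    rw [Polynomial.coeff_C_mul, Polynomial.coeff_X_pow, if_neg, mul_zero]
    have : i ≤ p := Nat.lt_succ_iff.mp (Finset.mem_range.mp hi)
    omega
  · intro h; simp at h

def mfun (k : ℕ) (j : ℕ) : ℕ := if j ≤ k then j else 2*k - j

lemma Ioc_split (k : ℕ) : Finset.Ioc 0 (2*k) = Finset.Ioc 0 k ∪ Finset.Ioc k (2*k) :=
  (Finset.Ioc_union_Ioc_eq_Ioc (Nat.zero_le k) (by omega)).symm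

lemma Ioc_disj (k : ℕ) : Disjoint (Finset.Ioc 0 k) (Finset.Ioc k (2*k)) := by
  rw [Finset.disjoint_left]
  intro x hx hx'
  simp only [Finset.mem_Ioc] at hx hx'
  omega

lemma genPoly_eq (k : ℕ) : genPoly k = pprod (Finset.Icc 1 (2*k)) (mfun k) := by
  rw [genPoly, pprod,
    show Finset.Icc 1 (2*k) = Finset.Ioc 0 (2*k) by rw [← Finset.Icc_add_one_left_eq_Ioc]; rfl,
    Ioc_split, Finset.prod_union (Ioc_disj k)]
  congr 1
  · rw [show Finset.Ioc 0 k = Finset.Icc 1 k by rw [← Finset.Icc_add_one_left_eq_Ioc]; rfl]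
    refine Finset.prod_congr rfl fun j hj => ?_
    have := Finset.mem_Icc.mp hj
    rw [lin, mfun, if_pos this.2]
  · rw [show Finset.Ioc k (2*k) = Finset.Icc (k+1) (2*k) by rw [Finset.Icc_add_one_left_eq_Ioc]]
    refine Finset.prod_congr rfl fun j hj => ?_
    have := Finset.mem_Icc.mp hj
    rw [lin, mfun, if_neg (by omega)]

def Hp (p : ℕ) : Polynomial ℚ := (Gp p).comp (Polynomial.X + Polynomial.C 1)
def H2p (p : ℕ) : Polynomial ℚ := (Gp p).comp (Polynomial.C 2 * Polynomial.X + Polynomial.C 1)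

lemma Hp_eval (p k : ℕ) : (Hp p).eval (k:ℚ) = ∑ j ∈ range (k+1), (j:ℚ)^p := by
  rw [Hp, Polynomial.eval_comp]
  have : Polynomial.eval (k:ℚ) (Polynomial.X + Polynomial.C 1) = ((k+1 : ℕ) : ℚ) := by
    push_cast; simp
  rw [this, Gp_eval]

lemma H2p_eval (p k : ℕ) : (H2p p).eval (k:ℚ) = ∑ j ∈ range (2*k+1), (j:ℚ)^p := by
  rw [H2p, Polynomial.eval_comp]
  have : Polynomial.eval (k:ℚ) (Polynomial.C 2 * Polynomial.X + Polynomial.C 1)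
      = ((2*k+1 : ℕ) : ℚ) := by push_cast; simp
  rw [this, Gp_eval]

def SPoly (t : ℕ) : Polynomial ℚ :=
  Polynomial.C 2 * Hp (t+1) - H2p (t+1) + Polynomial.C 2 * (Polynomial.X * (H2p t - Hp t))

lemma sum_Ioc_pow (a b p : ℕ) (h : a ≤ b) :
    ∑ j ∈ Finset.Ioc a b, (j:ℚ)^p = ∑ j ∈ range (b+1), (j:ℚ)^p - ∑ j ∈ range (a+1), (j:ℚ)^p := by
  rw [← Finset.sum_Ico_eq_sub _ (by omega : a + 1 ≤ b + 1)]
  congr 1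
  rw [← Finset.Icc_add_one_left_eq_Ioc, Finset.Ico_add_one_right_eq_Icc]

lemma SPoly_eval (t : ℕ) (k : ℕ) :
    (SPoly t).eval (k:ℚ) = ∑ j ∈ Finset.Icc 1 (2*k), (mfun k j : ℚ) * (j:ℚ)^t := by
  rw [show Finset.Icc 1 (2*k) = Finset.Ioc 0 (2*k) by rw [← Finset.Icc_add_one_left_eq_Ioc]; rfl,
    Ioc_split, Finset.sum_union (Ioc_disj k)]
  have h1 : ∑ j ∈ Finset.Ioc 0 k, (mfun k j : ℚ) * (j:ℚ)^t
      = ∑ j ∈ Finset.Ioc 0 k, (j:ℚ)^(t+1) := by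
    refine Finset.sum_congr rfl fun j hj => ?_
    have := Finset.mem_Ioc.mp hj
    rw [mfun, if_pos this.2]
    ring
  have h2 : ∑ j ∈ Finset.Ioc k (2*k), (mfun k j : ℚ) * (j:ℚ)^t
      = ∑ j ∈ Finset.Ioc k (2*k), ((2*(k:ℚ)) * (j:ℚ)^t - (j:ℚ)^(t+1)) := by
    refine Finset.sum_congr rfl fun j hj => ?_
    have hj' := Finset.mem_Ioc.mp hj
    rw [mfun, if_neg (by omega)]
    have : ((2*k - j : ℕ) : ℚ) = 2*(k:ℚ) - (j:ℚ) := by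
      have : (2*k - j : ℕ) + j = 2*k := by omega
      have := congrArg (fun n : ℕ => (n:ℚ)) this
      push_cast at this
      linarith
    rw [this]
    ring
  rw [h1, h2, Finset.sum_sub_distrib, ← Finset.mul_sum]
  rw [sum_Ioc_pow 0 k _ (Nat.zero_le k), sum_Ioc_pow k (2*k) _ (by omega),
    sum_Ioc_pow k (2*k) _ (by omega)]
  have h0 : ∑ j ∈ range (0+1), (j:ℚ)^(t+1) = 0 := by simp
  rw [h0]
  rw [SPoly]
  simp only [Polynomial.eval_add, Polynomial.eval_sub, Polynomial.eval_mul, Polynomial.eval_C,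
    Polynomial.eval_X, Hp_eval, H2p_eval]
  ring

lemma Gp_natDegree (p : ℕ) : (Gp p).natDegree = p + 1 := by
  refine le_antisymm (Gp_natDegree_le p) (Polynomial.le_natDegree_of_ne_zero ?_)
  rw [Gp_coeff_top]
  have : ((p:ℚ)+1) ≠ 0 := by positivity
  simpa using this

lemma Gp_leadingCoeff (p : ℕ) : (Gp p).leadingCoeff = 1/(p+1) := by
  rw [Polynomial.leadingCoeff, Gp_natDegree, Gp_coeff_top]

lemma Hp_natDegree (p : ℕ) : (Hp p).natDegree = p + 1 := by
  rw [Hp, Polynomial.natDegree_comp, Gp_natDegree, Polynomial.natDegree_X_add_C, mul_one]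

lemma Hp_leadingCoeff (p : ℕ) : (Hp p).leadingCoeff = 1/(p+1) := by
  rw [Hp, Polynomial.leadingCoeff_comp (by rw [Polynomial.natDegree_X_add_C]; norm_num),
    Gp_leadingCoeff, Polynomial.leadingCoeff_X_add_C, one_pow, mul_one]

lemma H2p_natDegree (p : ℕ) : (H2p p).natDegree = p + 1 := by
  rw [H2p, Polynomial.natDegree_comp, Gp_natDegree,
    Polynomial.natDegree_linear (by norm_num : (2:ℚ) ≠ 0)]
  ring

lemma H2p_leadingCoeff (p : ℕ) : (H2p p).leadingCoeff = 2^(p+1)/(p+1) := by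
  rw [H2p, Polynomial.leadingCoeff_comp
    (by rw [Polynomial.natDegree_linear (by norm_num : (2:ℚ) ≠ 0)]; norm_num),
    Gp_leadingCoeff, Gp_natDegree, Polynomial.leadingCoeff_linear (by norm_num : (2:ℚ) ≠ 0)]
  ring

lemma SPoly_natDegree_le (t : ℕ) : (SPoly t).natDegree ≤ t + 2 := by
  rw [SPoly]
  refine le_trans (Polynomial.natDegree_add_le _ _) (max_le (le_trans (Polynomial.natDegree_sub_le _ _) (max_le ?_ ?_)) ?_)
  · exact le_trans (Polynomial.natDegree_C_mul_le _ _) (by rw [Hp_natDegree])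
  · rw [H2p_natDegree]
  · refine le_trans (Polynomial.natDegree_C_mul_le _ _) ?_
    refine le_trans (Polynomial.natDegree_mul_le) ?_
    have : (H2p t - Hp t).natDegree ≤ t + 1 := by
      refine le_trans (Polynomial.natDegree_sub_le _ _) ?_
      simp [H2p_natDegree, Hp_natDegree]
    rw [Polynomial.natDegree_X]
    omega

lemma coeff_top_of_natDegree (q : Polynomial ℚ) (n : ℕ) (h : q.natDegree = n) :
    q.coeff n = q.leadingCoeff := by rw [← h, Polynomial.coeff_natDegree]

lemma SPoly_coeff1 : (SPoly 1).coeff 3 = 1 := by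
  rw [SPoly]
  simp only [Polynomial.coeff_add, Polynomial.coeff_sub, Polynomial.coeff_C_mul]
  rw [coeff_top_of_natDegree _ 3 (Hp_natDegree 2), coeff_top_of_natDegree _ 3 (H2p_natDegree 2),
    Hp_leadingCoeff, H2p_leadingCoeff]
  rw [show (3:ℕ) = 2+1 from rfl, Polynomial.coeff_X_mul, Polynomial.coeff_sub,
    coeff_top_of_natDegree _ 2 (Hp_natDegree 1), coeff_top_of_natDegree _ 2 (H2p_natDegree 1),
    Hp_leadingCoeff, H2p_leadingCoeff]
  norm_num

def F : ℕ → Polynomial ℚ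
  | 0 => 1
  | (r+1) => Polynomial.C (((r:ℚ)+1))⁻¹ *
      ∑ i ∈ (range (r+1)).attach,
        (-1:Polynomial ℚ)^(r-i.1) * SPoly (r+1-i.1) * F i.1
decreasing_by exact Finset.mem_range.mp i.2

lemma F_succ (r : ℕ) : F (r+1) = Polynomial.C (((r:ℚ)+1))⁻¹ *
    ∑ i ∈ range (r+1), (-1:Polynomial ℚ)^(r-i) * SPoly (r+1-i) * F i := by
  rw [F]
  congr 1
  exact Finset.sum_attach (range (r+1)) fun i => (-1:Polynomial ℚ)^(r-i) * SPoly (r+1-i) * F i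

lemma F_eval : ∀ r : ℕ, ∀ k : ℕ, (genPoly k).coeff r = (F r).eval (k:ℚ) := by
  intro r
  induction r using Nat.strong_induction_on with
  | _ r ih =>
    match r with
    | 0 =>
      intro k
      rw [show F 0 = 1 by rw [F], Polynomial.eval_one, Polynomial.coeff_zero_eq_eval_zero]
      simp [genPoly, Polynomial.eval_prod]
    | (r+1) =>
      intro k
      have hnz : ((r:ℚ)+1) ≠ 0 := by positivity
      have hn := newton (Finset.Icc 1 (2*k)) (mfun k) r
      rw [← genPoly_eq] at hn
      have : (genPoly k).coeff (r+1) = ((r:ℚ)+1)⁻¹ * (((r:ℚ)+1) * (genPoly k).coeff (r+1)) := by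
        field_simp
      rw [this, hn, F_succ]
      rw [Polynomial.eval_mul, Polynomial.eval_C, Polynomial.eval_finset_sum]
      congr 1
      refine Finset.sum_congr rfl fun i hi => ?_
      have hir : i < r + 1 := Finset.mem_range.mp hi
      rw [Polynomial.eval_mul, Polynomial.eval_mul, Polynomial.eval_pow]
      rw [← SPoly_eval (r+1-i) k, ← ih i hir k]
      simp only [Polynomial.eval_neg, Polynomial.eval_one]
      ring

lemma T_natDegree_le (r i : ℕ) (hF : (F i).natDegree ≤ 3*i) :
    ((-1:Polynomial ℚ)^(r-i) * SPoly (r+1-i) * F i).natDegree ≤ (r+1-i) + 2 + 3*i := by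
  refine le_trans (Polynomial.natDegree_mul_le) ?_
  have h1 : ((-1:Polynomial ℚ)^(r-i) * SPoly (r+1-i)).natDegree ≤ (r+1-i) + 2 := by
    refine le_trans (Polynomial.natDegree_mul_le) ?_
    have : ((-1:Polynomial ℚ)^(r-i)).natDegree = 0 := by
      rw [Polynomial.natDegree_pow, Polynomial.natDegree_neg, Polynomial.natDegree_one, mul_zero]
    rw [this, zero_add]
    exact SPoly_natDegree_le _
  omega

lemma F_deg : ∀ r : ℕ, (F r).natDegree ≤ 3*r ∧ (F r).coeff (3*r) = 1/(r.factorial : ℚ) := by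
  intro r
  induction r using Nat.strong_induction_on with
  | _ r ih =>
    match r with
    | 0 => simp [show F 0 = 1 by rw [F]]
    | (r+1) =>
    obtain ⟨hdeg, hcoeff⟩ := ih r (Nat.lt_succ_self r)
    have hlcne : (F r).coeff (3*r) ≠ 0 := by
      rw [hcoeff]
      have : (r.factorial : ℚ) ≠ 0 := by exact_mod_cast r.factorial_ne_zero
      simp [this]
    have hFdeg : (F r).natDegree = 3*r :=
      le_antisymm hdeg (Polynomial.le_natDegree_of_ne_zero hlcne)
    have hS1deg : (SPoly 1).natDegree = 3 :=
      le_antisymm (SPoly_natDegree_le 1) (Polynomial.le_natDegree_of_ne_zero (by rw [SPoly_coeff1]; norm_num))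
    constructor
    · rw [F_succ]
      refine le_trans (Polynomial.natDegree_mul_le) ?_
      rw [Polynomial.natDegree_C, zero_add]
      refine Polynomial.natDegree_sum_le_of_forall_le _ _ fun i hi => ?_
      have hir : i < r + 1 := Finset.mem_range.mp hi
      refine le_trans (T_natDegree_le r i (ih i hir).1) ?_
      omega
    · rw [F_succ, Polynomial.coeff_C_mul, Polynomial.finset_sum_coeff]
      rw [Finset.sum_eq_single r]
      · have : (-1:Polynomial ℚ)^(r-r) * SPoly (r+1-r) * F r = SPoly 1 * F r := by
          rw [Nat.sub_self, pow_zero, one_mul, Nat.succ_sub (le_refl r), Nat.sub_self]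
        rw [this]
        have h33 : 3*(r+1) = (SPoly 1).natDegree + (F r).natDegree := by
          rw [hS1deg, hFdeg]; ring
        rw [h33, Polynomial.coeff_mul_degree_add_degree, Polynomial.leadingCoeff,
          Polynomial.leadingCoeff, hS1deg, hFdeg, SPoly_coeff1, hcoeff, Nat.factorial_succ]
        push_cast
        rw [one_mul]
        field_simp

      · intro i hi hne
        have hir : i < r + 1 := Finset.mem_range.mp hi
        have hlt : ((-1:Polynomial ℚ)^(r-i) * SPoly (r+1-i) * F i).natDegree < 3*(r+1) := by
          refine lt_of_le_of_lt (T_natDegree_le r i (ih i hir).1) ?_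
          omega
        exact Polynomial.coeff_eq_zero_of_natDegree_lt hlt
      · intro h
        simp at h

end

theorem stmt_12 (r : ℕ) :
    ∃ f : Polynomial ℚ, f.natDegree = 3 * r ∧ f.leadingCoeff = 1 / (r.factorial : ℚ) ∧
      ∀ k : ℕ, 0 < k → r ≤ k ^ 2 → (genPoly k).coeff r = f.eval (k : ℚ) := by
  obtain ⟨hdeg, hcoeff⟩ := F_deg r
  have hne : (F r).coeff (3*r) ≠ 0 := by
    rw [hcoeff]
    have : (r.factorial : ℚ) ≠ 0 := by exact_mod_cast r.factorial_ne_zero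
    simp [this]
  have hFdeg : (F r).natDegree = 3*r := le_antisymm hdeg (Polynomial.le_natDegree_of_ne_zero hne)
  exact ⟨F r, hFdeg, by rw [Polynomial.leadingCoeff, hFdeg, hcoeff],
    fun k _ _ => F_eval r k⟩
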